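/- Let p and q be two distinct points of the Euclidean plane ℝ² and let U = ℝ² \ {p,q}, so that ∂U = {p,q}, and define ρ_U(x,y) = max{log(1 + |x−y|/(|x−p|·|y−p|)), log(1 + |x−y|/(|x−q|·|y−q|))} for x,y ∈ U, where |·| denotes Euclidean distance. Then for every δ with 0 < δ < log 2 there exist points x, y, z, t ∈ U such that ρ_U(x,y) + ρ_U(z,t) > max{ρ_U(x,z) + ρ_U(y,t), ρ_U(x,t) + ρ_U(y,z)} + 2δ; that is, (U, ρ_U) is not Gromov hyperbolic with any parameter smaller than log 2. -/

import Mathlib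

noncomputable def rhoPQ (p q x y : EuclideanSpace ℝ (Fin 2)) : ℝ :=
  max (Real.log (1 + dist x y / (dist x p * dist y p)))
      (Real.log (1 + dist x y / (dist x q * dist y q)))

set_option maxHeartbeats 2000000 in
theorem stmt_8 (p q : EuclideanSpace ℝ (Fin 2)) (hpq : p ≠ q)
    (U : Set (EuclideanSpace ℝ (Fin 2))) (hUdef : U = {p, q}ᶜ)
    (δ : ℝ) (hδ0 : 0 < δ) (hδ : δ < Real.log 2) :
    ∃ x ∈ U, ∃ y ∈ U, ∃ z ∈ U, ∃ t ∈ U,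
      max (rhoPQ p q x z + rhoPQ p q y t) (rhoPQ p q x t + rhoPQ p q y z) + 2 * δ <
        rhoPQ p q x y + rhoPQ p q z t := by
  have hd0 : (0:ℝ) < dist p q := dist_pos.mpr hpq
  set d : ℝ := dist p q with hdDef
  -- choose ε
  have hE2 : Real.exp δ < 2 := by
    calc Real.exp δ < Real.exp (Real.log 2) := Real.exp_lt_exp.mpr hδ
      _ = 2 := Real.exp_log (by norm_num)
  have hE0 : 0 < Real.exp δ := Real.exp_pos δ
  have hs0 : 0 < 2 - Real.exp δ := by linarith
  obtain ⟨ε, hε0, hε4, hεs⟩ : ∃ ε : ℝ, 0 < ε ∧ ε ≤ d/4 ∧ ε * (d+4) ≤ (2 - Real.exp δ) * d := by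
    refine ⟨min (d/4) ((2 - Real.exp δ)*d/(d+4)), lt_min (by linarith) (by positivity),
      min_le_left _ _, ?_⟩
    have h := min_le_right (d/4) ((2 - Real.exp δ)*d/(d+4))
    exact (le_div_iff₀ (by linarith)).mp h
  have hde : 0 < d - ε := by linarith
  have hde2 : 0 < d - 2*ε := by linarith
  have hdpe : 0 < d + ε := by linarith
  have hne : ε ≠ 0 := hε0.ne'
  -- geometry
  set u : EuclideanSpace ℝ (Fin 2) := d⁻¹ • (q - p) with huDef
  have hu : ‖u‖ = 1 := by
    rw [huDef, norm_smul, Real.norm_eq_abs, abs_of_pos (by positivity),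
      show ‖q - p‖ = d from by rw [← dist_eq_norm, dist_comm]]
    field_simp
  set f : ℝ → EuclideanSpace ℝ (Fin 2) := fun c => p + c • u with hfDef
  have hdist : ∀ a b : ℝ, dist (f a) (f b) = |a - b| := by
    intro a b
    rw [hfDef]
    simp only [dist_eq_norm, add_sub_add_left_eq_sub, ← sub_smul, norm_smul,
      Real.norm_eq_abs, hu, mul_one]
  have hfp : f 0 = p := by simp [hfDef]
  have hfq : f d = q := by
    rw [hfDef]; simp only [huDef, smul_smul, mul_inv_cancel₀ hd0.ne', one_smul]
    abel
  have hdp : ∀ a : ℝ, dist (f a) p = |a| := by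
    intro a; rw [← hfp, hdist, sub_zero]
  have hdq : ∀ a : ℝ, dist (f a) q = |a - d| := by
    intro a; rw [← hfq, hdist]
  have hfmem : ∀ a : ℝ, a ≠ 0 → a ≠ d → f a ∈ U := by
    intro a h0 hdd
    rw [hUdef]
    simp only [Set.mem_compl_iff, Set.mem_insert_iff, Set.mem_singleton_iff, not_or]
    constructor
    · intro h
      apply h0
      have := hdp a
      rw [h, dist_self] at this
      simpa using this.symm
    · intro h
      apply sub_ne_zero.mpr hdd
      have := hdq a
      rw [h, dist_self] at this
      simpa using this.symm
  have hrho : ∀ a b : ℝ, rhoPQ p q (f a) (f b) =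
      max (Real.log (1 + |a - b| / (|a| * |b|)))
          (Real.log (1 + |a - b| / (|a - d| * |b - d|))) := by
    intro a b
    rw [rhoPQ, hdist, hdp, hdp, hdq, hdq]
  -- the four points: x = f ε, y = f (-ε), z = f (d+ε), t = f (d-ε)
  refine ⟨f ε, hfmem ε hε0.ne' (by linarith), f (-ε), hfmem (-ε) (by linarith) (by linarith),
    f (d+ε), hfmem (d+ε) (by linarith) (by linarith),
    f (d-ε), hfmem (d-ε) (by linarith) (by linarith), ?_⟩
  set K : ℝ := Real.log (1 + 2/ε) with hK
  set L : ℝ := Real.log (1 + d/(ε*(d-ε))) with hL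
  have hD : 0 < ε*(d-ε) := mul_pos hε0 hde
  -- lower bounds on the two "good" distances
  have hxy : K ≤ rhoPQ p q (f ε) (f (-ε)) := by
    rw [hrho]
    have e1 : |ε - -ε| / (|ε| * |(-ε)|) = 2/ε := by
      rw [show ε - -ε = 2*ε by ring, abs_neg, abs_of_pos hε0,
        abs_of_pos (by linarith : (0:ℝ) < 2*ε)]
      field_simp
    rw [e1]
    exact le_max_left _ _
  have hzt : K ≤ rhoPQ p q (f (d+ε)) (f (d-ε)) := by
    rw [hrho]
    have e1 : |d + ε - (d - ε)| / (|d + ε - d| * |d - ε - d|) = 2/ε := by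
      rw [show d + ε - (d - ε) = 2*ε by ring, abs_of_pos (by linarith : (0:ℝ) < 2*ε),
        show d + ε - d = ε by ring, abs_of_pos hε0,
        show d - ε - d = -ε by ring, abs_neg, abs_of_pos hε0]
      field_simp
    rw [e1]
    exact le_max_right _ _
  -- upper bound helper
  have hub : ∀ r : ℝ, 0 ≤ r → r ≤ d/(ε*(d-ε)) → Real.log (1 + r) ≤ L := by
    intro r hr h
    rw [hL]
    exact Real.log_le_log (by linarith) (by linarith)
  -- ratio comparisons
  have hA : d/(ε*(d+ε)) ≤ d/(ε*(d-ε)) := by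
    rw [div_le_div_iff₀ (by positivity) hD]
    nlinarith [mul_pos (mul_pos hd0 hε0) hε0]
  have hA' : d/((d+ε)*ε) ≤ d/(ε*(d-ε)) := by rw [mul_comm (d+ε) ε]; exact hA
  have hB0 : d/((d-ε)*ε) ≤ d/(ε*(d-ε)) := le_of_eq (by rw [mul_comm])
  have hB : (d-2*ε)/(ε*(d-ε)) ≤ d/(ε*(d-ε)) := by
    rw [div_le_div_iff₀ hD hD]
    nlinarith [mul_pos hε0 hde]
  have hB' : (d-2*ε)/((d-ε)*ε) ≤ d/(ε*(d-ε)) := by rw [mul_comm (d-ε) ε]; exact hB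
  have hC : (d+2*ε)/(ε*(d+ε)) ≤ d/(ε*(d-ε)) := by
    rw [div_le_div_iff₀ (by positivity) hD]
    nlinarith [mul_pos (mul_pos hε0 hε0) hε0]
  have hC' : (d+2*ε)/((d+ε)*ε) ≤ d/(ε*(d-ε)) := by rw [mul_comm (d+ε) ε]; exact hC
  -- bounds on the four cross distances
  have hxz : rhoPQ p q (f ε) (f (d+ε)) ≤ L := by
    rw [hrho]
    have e1 : |ε - (d+ε)| / (|ε| * |d+ε|) = d/(ε*(d+ε)) := by
      rw [show ε - (d+ε) = -d by ring, abs_neg, abs_of_pos hd0, abs_of_pos hε0,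
        abs_of_pos hdpe]
    have e2 : |ε - (d+ε)| / (|ε - d| * |d+ε-d|) = d/((d-ε)*ε) := by
      rw [show ε - (d+ε) = -d by ring, abs_neg, abs_of_pos hd0,
        show ε - d = -(d-ε) by ring, abs_neg, abs_of_pos hde,
        show d+ε-d = ε by ring, abs_of_pos hε0]
    rw [e1, e2]
    exact max_le (hub _ (by positivity) hA) (hub _ (by positivity) hB0)
  have hyt : rhoPQ p q (f (-ε)) (f (d-ε)) ≤ L := by
    rw [hrho]
    have e1 : |-ε - (d-ε)| / (|(-ε)| * |d-ε|) = d/(ε*(d-ε)) := by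
      rw [show -ε - (d-ε) = -d by ring, abs_neg, abs_of_pos hd0, abs_neg,
        abs_of_pos hε0, abs_of_pos hde]
    have e2 : |-ε - (d-ε)| / (|-ε - d| * |d-ε-d|) = d/((d+ε)*ε) := by
      rw [show -ε - (d-ε) = -d by ring, abs_neg, abs_of_pos hd0,
        show -ε - d = -(d+ε) by ring, abs_neg, abs_of_pos hdpe,
        show d-ε-d = -ε by ring, abs_neg, abs_of_pos hε0]
    rw [e1, e2]
    exact max_le (hub _ (by positivity) le_rfl) (hub _ (by positivity) hA')
  have hxt : rhoPQ p q (f ε) (f (d-ε)) ≤ L := by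
    rw [hrho]
    have e1 : |ε - (d-ε)| / (|ε| * |d-ε|) = (d-2*ε)/(ε*(d-ε)) := by
      rw [show ε - (d-ε) = -(d-2*ε) by ring, abs_neg, abs_of_pos hde2,
        abs_of_pos hε0, abs_of_pos hde]
    have e2 : |ε - (d-ε)| / (|ε - d| * |d-ε-d|) = (d-2*ε)/((d-ε)*ε) := by
      rw [show ε - (d-ε) = -(d-2*ε) by ring, abs_neg, abs_of_pos hde2,
        show ε - d = -(d-ε) by ring, abs_neg, abs_of_pos hde,
        show d-ε-d = -ε by ring, abs_neg, abs_of_pos hε0]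
    rw [e1, e2]
    exact max_le (hub _ (by positivity) hB) (hub _ (by positivity) hB')
  have hyz : rhoPQ p q (f (-ε)) (f (d+ε)) ≤ L := by
    rw [hrho]
    have e1 : |-ε - (d+ε)| / (|(-ε)| * |d+ε|) = (d+2*ε)/(ε*(d+ε)) := by
      rw [show -ε - (d+ε) = -(d+2*ε) by ring, abs_neg,
        abs_of_pos (by linarith : (0:ℝ) < d+2*ε), abs_neg, abs_of_pos hε0,
        abs_of_pos hdpe]
    have e2 : |-ε - (d+ε)| / (|-ε - d| * |d+ε-d|) = (d+2*ε)/((d+ε)*ε) := by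
      rw [show -ε - (d+ε) = -(d+2*ε) by ring, abs_neg,
        abs_of_pos (by linarith : (0:ℝ) < d+2*ε),
        show -ε - d = -(d+ε) by ring, abs_neg, abs_of_pos hdpe,
        show d+ε-d = ε by ring, abs_of_pos hε0]
    rw [e1, e2]
    exact max_le (hub _ (by positivity) hC) (hub _ (by positivity) hC')
  -- key strict inequality : L + δ < K
  have hcore : (1 + d/(ε*(d-ε))) * Real.exp δ < 1 + 2/ε := by
    have key : (ε*(d-ε)+d)*Real.exp δ < ε*(d-ε)+2*(d-ε) := by
      nlinarith [mul_lt_mul_of_pos_left hE2 hD, sq_nonneg ε, hε0.le]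
    rw [show (1 + d/(ε*(d-ε))) = (ε*(d-ε)+d)/(ε*(d-ε)) by field_simp,
        show (1+2/ε : ℝ) = (ε*(d-ε)+2*(d-ε))/(ε*(d-ε)) by field_simp,
        div_mul_eq_mul_div, div_lt_div_iff₀ hD hD]
    nlinarith [mul_lt_mul_of_pos_right key hD]
  have hLK : L + δ < K := by
    rw [hL, hK]
    calc Real.log (1 + d/(ε*(d-ε))) + δ
        = Real.log ((1 + d/(ε*(d-ε))) * Real.exp δ) := by
          rw [Real.log_mul (by positivity) (Real.exp_ne_zero δ), Real.log_exp]
      _ < Real.log (1 + 2/ε) := Real.log_lt_log (by positivity) hcore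
  calc max (rhoPQ p q (f ε) (f (d+ε)) + rhoPQ p q (f (-ε)) (f (d-ε)))
        (rhoPQ p q (f ε) (f (d-ε)) + rhoPQ p q (f (-ε)) (f (d+ε))) + 2*δ
      ≤ (L + L) + 2*δ := by
        apply add_le_add_left
        exact max_le (add_le_add hxz hyt) (add_le_add hxt hyz)
    _ < K + K := by linarith
    _ ≤ rhoPQ p q (f ε) (f (-ε)) + rhoPQ p q (f (d+ε)) (f (d-ε)) := add_le_add hxy hzt
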